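/- Let A be a 4×4 real matrix with Aᵀ η A = η (where η = diag(−1,1,1,1)) and A₀₀ ≥ 1. Then the 3×3 matrix R defined by R_{ij} = A_{ij} − A_{i0}A_{0j}/(1 + A₀₀), for i,j ∈ {1,2,3}, is orthogonal: R Rᵀ = I. -/
import Mathlib

set_option maxHeartbeats 1000000


noncomputable section
open Matrix

/-- The matrix η = diag(−1,1,1,1) of the Minkowski inner product. -/
def eta : Matrix (Fin 4) (Fin 4) ℝ := Matrix.diagonal ![(-1 : ℝ), 1, 1, 1]

/-- For a Lorentz transformation A with A₀₀ ≥ 1, the 3×3 matrix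
R_{ij} = A_{ij} − A_{i0}A_{0j}/(1 + A₀₀) is orthogonal: R Rᵀ = I. -/
theorem rotation_orthogonal (A : Matrix (Fin 4) (Fin 4) ℝ)
    (hA : Aᵀ * eta * A = eta) (hA00 : 1 ≤ A 0 0) :
    (Matrix.of fun i j : Fin 3 =>
        A i.succ j.succ - A i.succ 0 * A 0 j.succ / (1 + A 0 0)) *
      (Matrix.of fun i j : Fin 3 =>
        A i.succ j.succ - A i.succ 0 * A 0 j.succ / (1 + A 0 0))ᵀ = 1 := by
  have heta2 : eta * eta = 1 := by
    ext i j
    fin_cases i <;> fin_cases j <;> simp [eta, Matrix.mul_apply, Fin.sum_univ_four]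
  have h1 : (eta * Aᵀ * eta) * A = 1 := by
    rw [Matrix.mul_assoc, Matrix.mul_assoc, ← Matrix.mul_assoc Aᵀ, hA, heta2]
  have h2 : A * (eta * Aᵀ * eta) = 1 := mul_eq_one_comm.mpr h1
  have hAAt : A * eta * Aᵀ = eta := by
    calc A * eta * Aᵀ = (A * (eta * Aᵀ * eta)) * eta := by
          simp only [Matrix.mul_assoc, heta2, Matrix.mul_one]
      _ = eta := by rw [h2, Matrix.one_mul]
  have h : ∀ i k : Fin 4, (A * eta * Aᵀ) i k = eta i k := fun i k => by rw [hAAt]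
  simp only [Matrix.mul_apply, Matrix.transpose_apply, Fin.sum_univ_four, eta,
    Matrix.diagonal_apply] at h
  have e00 := h 0 0; have e01 := h 0 1; have e02 := h 0 2; have e03 := h 0 3
  have e11 := h 1 1; have e12 := h 1 2; have e13 := h 1 3
  have e22 := h 2 2; have e23 := h 2 3; have e33 := h 3 3
  simp at e00 e01 e02 e03 e11 e12 e13 e22 e23 e33
  clear h hA hAAt h1 h2 heta2
  have hd : (1 + A 0 0) ≠ 0 := by linarith
  have hs : ((2:Fin 3)).succ = 3 := rfl
  ext i k
  fin_cases i <;> fin_cases k <;>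
    simp [Matrix.mul_apply, Fin.sum_univ_three, Matrix.one_apply, hs] <;>
    field_simp
  · linear_combination (1 + A 0 0)^2 * e11 - (1 + A 0 0) * (A 1 0) * e01
      - (1 + A 0 0) * (A 1 0) * e01 + (A 1 0) * (A 1 0) * e00
  · linear_combination (1 + A 0 0)^2 * e12 - (1 + A 0 0) * (A 2 0) * e01
      - (1 + A 0 0) * (A 1 0) * e02 + (A 1 0) * (A 2 0) * e00
  · linear_combination (1 + A 0 0)^2 * e13 - (1 + A 0 0) * (A 3 0) * e01
      - (1 + A 0 0) * (A 1 0) * e03 + (A 1 0) * (A 3 0) * e00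
  · linear_combination (1 + A 0 0)^2 * e12 - (1 + A 0 0) * (A 2 0) * e01
      - (1 + A 0 0) * (A 1 0) * e02 + (A 2 0) * (A 1 0) * e00
  · linear_combination (1 + A 0 0)^2 * e22 - (1 + A 0 0) * (A 2 0) * e02
      - (1 + A 0 0) * (A 2 0) * e02 + (A 2 0) * (A 2 0) * e00
  · linear_combination (1 + A 0 0)^2 * e23 - (1 + A 0 0) * (A 3 0) * e02
      - (1 + A 0 0) * (A 2 0) * e03 + (A 2 0) * (A 3 0) * e00
  · linear_combination (1 + A 0 0)^2 * e13 - (1 + A 0 0) * (A 3 0) * e01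
      - (1 + A 0 0) * (A 1 0) * e03 + (A 3 0) * (A 1 0) * e00
  · linear_combination (1 + A 0 0)^2 * e23 - (1 + A 0 0) * (A 3 0) * e02
      - (1 + A 0 0) * (A 2 0) * e03 + (A 3 0) * (A 2 0) * e00
  · linear_combination (1 + A 0 0)^2 * e33 - (1 + A 0 0) * (A 3 0) * e03
      - (1 + A 0 0) * (A 3 0) * e03 + (A 3 0) * (A 3 0) * e00
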